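/- For every positive integer n and every real number α, the n×n Hankel determinant det(α·c_{i+j+1} + c_{i+j+2})_{i,j=0}^{n−1} equals (Σ_{j=0}^{n} g_{2j}(α)·g_{2j}(0)·∏_{ℓ=2j}^{2n−1} T_ℓ) · det(c_{i+j})_{i,j=0}^{n−1}. -/

import Mathlib

/-- `dyckGF T n k` is the weighted Dyck path generating function `c(n,k)`:
`c(0,k) = [k = 0]`, `c(n,k) = 0` for `k < 0`, and
`c(n,k) = c(n-1,k-1) + T_k c(n-1,k+1)` for `n ≥ 1`, `k ≥ 0`. -/
def dyckGF (T : ℕ → ℝ) : ℕ → ℤ → ℝ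
  | 0, k => if k = 0 then 1 else 0
  | n+1, k =>
      if k < 0 then 0
      else dyckGF T n (k-1) + T k.toNat * dyckGF T n (k+1)

/-- The polynomials `g_n(α)`: `g_0 = 1`, `g_1 = 1`,
`g_{2n}(α) = α g_{2n-1}(α) + T_{2n-2} g_{2n-2}(α)` and
`g_{2n+1}(α) = g_{2n}(α) + T_{2n-1} g_{2n-1}(α)` for `n ≥ 1`. -/
def gpoly (T : ℕ → ℝ) (α : ℝ) : ℕ → ℝ
  | 0 => 1
  | 1 => 1
  | n+2 => (if (n+2) % 2 = 0 then α else 1) * gpoly T α (n+1) + T n * gpoly T α n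

open Finset

namespace HankelAux
variable (T : ℕ → ℝ) (α : ℝ)

/-- the prefix product `π_k = T_0 ⋯ T_{k-1}` -/
def PP (k : ℕ) : ℝ := ∏ ℓ ∈ Finset.range k, T ℓ

lemma dyck_succ (n : ℕ) (k : ℤ) :
    dyckGF T (n+1) k = if k < 0 then 0
      else dyckGF T n (k-1) + T k.toNat * dyckGF T n (k+1) := rfl

lemma dyck_neg : ∀ (m : ℕ) (k : ℤ), k < 0 → dyckGF T m k = 0
  | 0, k, h => by simp [dyckGF]; omega
  | m+1, k, h => by rw [dyck_succ, if_pos h]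

lemma dyck_gt : ∀ (m : ℕ) (k : ℤ), (m : ℤ) < k → dyckGF T m k = 0
  | 0, k, h => by simp [dyckGF]; omega
  | m+1, k, h => by
      rw [dyck_succ, if_neg (by omega)]
      rw [dyck_gt m (k-1) (by omega), dyck_gt m (k+1) (by omega)]
      ring

lemma dyck_diag : ∀ (m : ℕ), dyckGF T m (m : ℤ) = 1
  | 0 => by simp [dyckGF]
  | m+1 => by
      rw [dyck_succ, if_neg (by omega)]
      have h1 : ((m+1 : ℕ) : ℤ) - 1 = (m : ℤ) := by push_cast; ring
      have h2 : dyckGF T m (((m+1 : ℕ) : ℤ) + 1) = 0 := dyck_gt T m _ (by push_cast; omega)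
      rw [h1, h2, dyck_diag m]; ring

lemma dyck_parity : ∀ (m : ℕ) (k : ℤ), Odd ((m : ℤ) + k) → dyckGF T m k = 0
  | 0, k, h => by
      obtain ⟨t, ht⟩ := h
      have : k ≠ 0 := by omega
      simp [dyckGF, this]
  | m+1, k, h => by
      obtain ⟨t, ht⟩ := h
      rcases lt_or_ge k 0 with hk | hk
      · exact dyck_neg T _ _ hk
      rw [dyck_succ, if_neg (by omega)]
      rw [dyck_parity m (k-1) ⟨t-1, by push_cast at ht ⊢; omega⟩,
          dyck_parity m (k+1) ⟨t, by push_cast at ht ⊢; omega⟩]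
      ring


lemma dyck_nat_succ (n k : ℕ) :
    dyckGF T (n+1) (k : ℤ) = dyckGF T n ((k : ℤ)-1) + T k * dyckGF T n ((k : ℤ)+1) := by
  rw [dyck_succ, if_neg (by omega)]
  norm_num

lemma PP_succ (k : ℕ) : PP T (k+1) = PP T k * T k := Finset.prod_range_succ _ _

lemma side (m m' M : ℕ) (h : m ≤ M) :
    ∑ k ∈ range (M+1), dyckGF T (m+1) (k : ℤ) * dyckGF T m' (k : ℤ) * PP T k
    = ∑ k ∈ range M, T k * PP T k *
        (dyckGF T m (k : ℤ) * dyckGF T m' ((k : ℤ)+1)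
          + dyckGF T m ((k : ℤ)+1) * dyckGF T m' (k : ℤ)) := by
  have e1 : ∀ k ∈ range (M+1),
      dyckGF T (m+1) (k : ℤ) * dyckGF T m' (k : ℤ) * PP T k
      = dyckGF T m ((k : ℤ)-1) * dyckGF T m' (k : ℤ) * PP T k
        + T k * dyckGF T m ((k : ℤ)+1) * dyckGF T m' (k : ℤ) * PP T k := by
    intro k _
    rw [dyck_nat_succ]; ring
  rw [Finset.sum_congr rfl e1, Finset.sum_add_distrib]
  have e2 : ∑ k ∈ range (M+1), dyckGF T m ((k : ℤ)-1) * dyckGF T m' (k : ℤ) * PP T k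
      = ∑ k ∈ range M, dyckGF T m (k : ℤ) * dyckGF T m' ((k : ℤ)+1) * (PP T k * T k) := by
    rw [Finset.sum_range_succ']
    have h0 : dyckGF T m ((0 : ℕ) : ℤ) - 1 = 0 ∨ True := Or.inr trivial
    have : dyckGF T m (((0:ℕ) : ℤ)-1) = 0 := dyck_neg T m _ (by norm_num)
    rw [this]
    simp only [zero_mul, add_zero]
    refine Finset.sum_congr rfl fun k _ => ?_
    have c1 : ((k+1 : ℕ) : ℤ) - 1 = (k : ℤ) := by push_cast; ring
    have c2 : ((k+1 : ℕ) : ℤ) = (k : ℤ) + 1 := by push_cast; ring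
    rw [c1, c2, PP_succ]
  have e3 : ∑ k ∈ range (M+1), T k * dyckGF T m ((k : ℤ)+1) * dyckGF T m' (k : ℤ) * PP T k
      = ∑ k ∈ range M, T k * dyckGF T m ((k : ℤ)+1) * dyckGF T m' (k : ℤ) * PP T k := by
    rw [Finset.sum_range_succ]
    have : dyckGF T m ((M : ℤ)+1) = 0 := dyck_gt T m _ (by push_cast; omega)
    rw [this]; ring
  rw [e2, e3, ← Finset.sum_add_distrib]
  refine Finset.sum_congr rfl fun k _ => ?_
  ring

lemma swap (m m' M : ℕ) (h1 : m ≤ M) (h2 : m' ≤ M) :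
    ∑ k ∈ range (M+1), dyckGF T (m+1) (k : ℤ) * dyckGF T m' (k : ℤ) * PP T k
    = ∑ k ∈ range (M+1), dyckGF T m (k : ℤ) * dyckGF T (m'+1) (k : ℤ) * PP T k := by
  rw [side T m m' M h1]
  have := side T m' m M h2
  have e : ∀ k ∈ range (M+1),
      dyckGF T m (k:ℤ) * dyckGF T (m'+1) (k:ℤ) * PP T k
      = dyckGF T (m'+1) (k:ℤ) * dyckGF T m (k:ℤ) * PP T k := fun k _ => by ring
  rw [Finset.sum_congr rfl e, this]
  refine Finset.sum_congr rfl fun k _ => ?_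
  ring

lemma bilin : ∀ (m' m M : ℕ), m + m' ≤ M →
    ∑ k ∈ range (M+1), dyckGF T m (k : ℤ) * dyckGF T m' (k : ℤ) * PP T k
    = dyckGF T (m+m') 0
  | 0, m, M, h => by
      rw [Finset.sum_eq_single 0]
      · simp [dyckGF, PP]
      · intro b _ hb
        have : dyckGF T 0 (b : ℤ) = 0 := by
          simp [dyckGF]; exact_mod_cast hb
        rw [this]; ring
      · intro hmem; exact absurd (Finset.mem_range.2 (by omega)) hmem
  | m'+1, m, M, h => by
      rw [← swap T m m' M (by omega) (by omega), bilin m' (m+1) M (by omega)]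
      congr 1
      omega

lemma sum_even_vanish (f : ℕ → ℝ) (h : ∀ m, f (2*m) = 0) :
    ∀ K, ∑ k ∈ range (2*K), f k = ∑ m ∈ range K, f (2*m+1)
  | 0 => by simp
  | K+1 => by
      have : 2*(K+1) = (2*K+1)+1 := by ring
      rw [this, Finset.sum_range_succ, Finset.sum_range_succ,
        Finset.sum_range_succ, sum_even_vanish f h K, h K]
      ring

lemma sum_odd_vanish (f : ℕ → ℝ) (h : ∀ m, f (2*m+1) = 0) :
    ∀ K, ∑ k ∈ range (2*K), f k = ∑ m ∈ range K, f (2*m)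
  | 0 => by simp
  | K+1 => by
      have : 2*(K+1) = (2*K+1)+1 := by ring
      rw [this, Finset.sum_range_succ, Finset.sum_range_succ,
        Finset.sum_range_succ, sum_odd_vanish f h K, h K]
      ring

lemma sum_trim (f : ℕ → ℝ) (L K n : ℕ) (hK : L ≤ K) (hn : L ≤ n)
    (h : ∀ m, L ≤ m → f m = 0) :
    ∑ m ∈ range K, f m = ∑ m ∈ range n, f m := by
  have key : ∀ N, L ≤ N → ∑ m ∈ range N, f m = ∑ m ∈ range L, f m := by
    intro N hN
    rw [← Finset.sum_subset (Finset.range_subset_range.2 hN)]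
    intro x hx hx'
    exact h x (by simp at hx'; omega)
  rw [key K hK, key n hn]


/-- generic odd-height moment expansion -/
lemma moment_odd (a b n : ℕ) (ha : a ≤ n - 1) (hn : 0 < n) :
    dyckGF T ((2*a+1) + (2*b+1)) 0
    = ∑ m ∈ range n,
        dyckGF T (2*a+1) ((2*m+1 : ℕ) : ℤ) * dyckGF T (2*b+1) ((2*m+1 : ℕ) : ℤ)
          * PP T (2*m+1) := by
  have h := (bilin T (2*b+1) (2*a+1) (2*(a+b+1)) (by omega)).symm
  rw [h]
  have h2 : (2*(a+b+1)) + 1 = 2*(a+b+1)+1 := rfl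
  have hev : ∀ m, dyckGF T (2*a+1) ((2*m : ℕ) : ℤ) * dyckGF T (2*b+1) ((2*m : ℕ) : ℤ)
      * PP T (2*m) = 0 := by
    intro m
    have : dyckGF T (2*a+1) ((2*m : ℕ) : ℤ) = 0 :=
      dyck_parity T _ _ ⟨(a+m : ℤ), by push_cast; ring⟩
    rw [this]; ring
  have h3 : (2*(a+b+1))+1 = 2*(a+b+1)+1 := rfl
  -- range (2*(a+b+1)+1) : make it even length 2*(a+b+2) by adding a vanishing term? 
  -- Instead: extend to range (2*(a+b+2)) since the extra term vanishes.
  have hext : ∑ k ∈ range (2*(a+b+1)+1),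
        dyckGF T (2*a+1) (k : ℤ) * dyckGF T (2*b+1) (k : ℤ) * PP T k
      = ∑ k ∈ range (2*(a+b+2)),
        dyckGF T (2*a+1) (k : ℤ) * dyckGF T (2*b+1) (k : ℤ) * PP T k := by
    conv_rhs => rw [show (2*(a+b+2)) = (2*(a+b+1)+1)+1 from by ring, Finset.sum_range_succ]
    have hz : dyckGF T (2*a+1) ((2*(a+b+1)+1 : ℕ) : ℤ) = 0 :=
      dyck_gt T _ _ (by push_cast; omega)
    rw [hz]; ring
  rw [hext, sum_even_vanish _ hev (a+b+2)]
  refine sum_trim _ (a+1) _ _ (by omega) (by omega) ?_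
  intro m hm
  have : dyckGF T (2*a+1) ((2*m+1 : ℕ) : ℤ) = 0 := dyck_gt T _ _ (by push_cast; omega)
  rw [this]; ring

lemma moment_even (a b n : ℕ) (ha : a ≤ n - 1) (hn : 0 < n) :
    dyckGF T (2*a + 2*b) 0
    = ∑ m ∈ range n,
        dyckGF T (2*a) ((2*m : ℕ) : ℤ) * dyckGF T (2*b) ((2*m : ℕ) : ℤ) * PP T (2*m) := by
  have h := (bilin T (2*b) (2*a) (2*(a+b)) (by omega)).symm
  rw [h]
  have hodd : ∀ m, dyckGF T (2*a) ((2*m+1 : ℕ) : ℤ) * dyckGF T (2*b) ((2*m+1 : ℕ) : ℤ)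
      * PP T (2*m+1) = 0 := by
    intro m
    have : dyckGF T (2*a) ((2*m+1 : ℕ) : ℤ) = 0 :=
      dyck_parity T _ _ ⟨(a+m : ℤ), by push_cast; ring⟩
    rw [this]; ring
  have hext : ∑ k ∈ range (2*(a+b)+1),
        dyckGF T (2*a) (k : ℤ) * dyckGF T (2*b) (k : ℤ) * PP T k
      = ∑ k ∈ range (2*(a+b+1)),
        dyckGF T (2*a) (k : ℤ) * dyckGF T (2*b) (k : ℤ) * PP T k := by
    conv_rhs => rw [show (2*(a+b+1)) = (2*(a+b)+1)+1 from by ring, Finset.sum_range_succ]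
    have hz : dyckGF T (2*a) ((2*(a+b)+1 : ℕ) : ℤ) = 0 :=
      dyck_gt T _ _ (by push_cast; omega)
    rw [hz]; ring
  rw [hext, sum_odd_vanish _ hodd (a+b+1)]
  refine sum_trim _ (a+1) _ _ (by omega) (by omega) ?_
  intro m hm
  have : dyckGF T (2*a) ((2*m : ℕ) : ℤ) = 0 := dyck_gt T _ _ (by push_cast; omega)
  rw [this]; ring


lemma g_even_succ (k : ℕ) :
    gpoly T α (2*k+2) = α * gpoly T α (2*k+1) + T (2*k) * gpoly T α (2*k) := by
  show gpoly T α ((2*k)+2) = _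
  rw [gpoly]
  have : (2*k+2) % 2 = 0 := by omega
  rw [if_pos this]

lemma g_odd_succ (k : ℕ) :
    gpoly T α (2*k+3) = gpoly T α (2*k+2) + T (2*k+1) * gpoly T α (2*k+1) := by
  show gpoly T α ((2*k+1)+2) = _
  rw [gpoly]
  have : (2*k+1+2) % 2 = 1 := by omega
  rw [if_neg (by omega)]
  ring

lemma g_zero : gpoly T α 0 = 1 := rfl
lemma g_one : gpoly T α 1 = 1 := rfl

lemma g_zero_even : ∀ j, gpoly T 0 (2*j) = ∏ m ∈ range j, T (2*m)
  | 0 => by simp [gpoly]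
  | j+1 => by
      have h1 : 2*(j+1) = 2*j+2 := by ring
      rw [h1, g_even_succ, g_zero_even j, Finset.prod_range_succ]
      ring

/-- F-step -/
lemma Fstep (m K : ℕ) (hm : m ≤ 2*K+1) :
    ∑ k ∈ range (K+1), (-1 : ℝ)^k * gpoly T α (2*k+1) * dyckGF T (m+1) ((2*k+1 : ℕ) : ℤ)
    = ∑ k ∈ range (K+1), (-1 : ℝ)^k * gpoly T α (2*k) * dyckGF T m ((2*k : ℕ) : ℤ) := by
  have expand : ∀ k ∈ range (K+1),
      (-1 : ℝ)^k * gpoly T α (2*k+1) * dyckGF T (m+1) ((2*k+1 : ℕ) : ℤ)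
      = (-1 : ℝ)^k * gpoly T α (2*k+1) * dyckGF T m ((2*k : ℕ) : ℤ)
        + (-1 : ℝ)^k * gpoly T α (2*k+1) * T (2*k+1) * dyckGF T m ((2*k+2 : ℕ) : ℤ) := by
    intro k _
    rw [dyck_nat_succ]
    have c1 : ((2*k+1 : ℕ) : ℤ) - 1 = ((2*k : ℕ) : ℤ) := by push_cast; ring
    have c2 : ((2*k+1 : ℕ) : ℤ) + 1 = ((2*k+2 : ℕ) : ℤ) := by push_cast; ring
    rw [c1, c2]; ring
  rw [Finset.sum_congr rfl expand, Finset.sum_add_distrib]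
  set v : ℕ → ℝ := fun k =>
    (-1 : ℝ)^k * (gpoly T α (2*k+1) - gpoly T α (2*k)) * dyckGF T m ((2*k : ℕ) : ℤ) with hv
  have hA : ∑ k ∈ range (K+1),
      (-1 : ℝ)^k * gpoly T α (2*k+1) * T (2*k+1) * dyckGF T m ((2*k+2 : ℕ) : ℤ)
      = - ∑ k ∈ range (K+1), v k := by
    rw [Finset.sum_range_succ]
    have hz : dyckGF T m ((2*K+2 : ℕ) : ℤ) = 0 := dyck_gt T _ _ (by push_cast; omega)
    rw [hz, mul_zero, add_zero]
    rw [Finset.sum_range_succ' v]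
    have hv0 : v 0 = 0 := by simp [hv, g_zero, g_one]
    rw [hv0, add_zero, ← Finset.sum_neg_distrib]
    refine Finset.sum_congr rfl fun k _ => ?_
    have : gpoly T α (2*(k+1)+1) - gpoly T α (2*(k+1)) = T (2*k+1) * gpoly T α (2*k+1) := by
      have h1 : 2*(k+1)+1 = 2*k+3 := by ring
      have h2 : 2*(k+1) = 2*k+2 := by ring
      rw [h1, h2, g_odd_succ]; ring
    simp only [hv, this]
    have h3 : (2*(k+1) : ℕ) = 2*k+2 := by ring
    rw [h3]
    ring
  rw [hA, ← sub_eq_add_neg, ← Finset.sum_sub_distrib]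
  refine Finset.sum_congr rfl fun k _ => ?_
  simp only [hv]
  ring

/-- E-step -/
lemma Estep (m K : ℕ) (hm : m ≤ 2*K) :
    ∑ k ∈ range (K+1), (-1 : ℝ)^k * gpoly T α (2*k) * dyckGF T (m+1) ((2*k : ℕ) : ℤ)
    = -α * ∑ k ∈ range (K+1), (-1 : ℝ)^k * gpoly T α (2*k+1) * dyckGF T m ((2*k+1 : ℕ) : ℤ) := by
  have expand : ∀ k ∈ range (K+1),
      (-1 : ℝ)^k * gpoly T α (2*k) * dyckGF T (m+1) ((2*k : ℕ) : ℤ)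
      = (-1 : ℝ)^k * gpoly T α (2*k) * dyckGF T m (((2*k : ℕ) : ℤ) - 1)
        + (-1 : ℝ)^k * gpoly T α (2*k) * T (2*k) * dyckGF T m ((2*k+1 : ℕ) : ℤ) := by
    intro k _
    rw [dyck_nat_succ]
    have c2 : ((2*k : ℕ) : ℤ) + 1 = ((2*k+1 : ℕ) : ℤ) := by push_cast; ring
    rw [c2]; ring
  rw [Finset.sum_congr rfl expand, Finset.sum_add_distrib]
  have hB : ∑ k ∈ range (K+1),
      (-1 : ℝ)^k * gpoly T α (2*k) * dyckGF T m (((2*k : ℕ) : ℤ) - 1)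
      = ∑ k ∈ range K, (-1 : ℝ)^(k+1) * gpoly T α (2*k+2) * dyckGF T m ((2*k+1 : ℕ) : ℤ) := by
    rw [Finset.sum_range_succ']
    have h0 : dyckGF T m (((2*0 : ℕ) : ℤ) - 1) = 0 := dyck_neg T _ _ (by norm_num)
    rw [h0, mul_zero, add_zero]
    refine Finset.sum_congr rfl fun k _ => ?_
    have c1 : ((2*(k+1) : ℕ) : ℤ) - 1 = ((2*k+1 : ℕ) : ℤ) := by push_cast; ring
    have c3 : (2*(k+1) : ℕ) = 2*k+2 := by ring
    rw [c1, c3]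
  have hC : ∑ k ∈ range (K+1),
      (-1 : ℝ)^k * gpoly T α (2*k) * T (2*k) * dyckGF T m ((2*k+1 : ℕ) : ℤ)
      = ∑ k ∈ range K, (-1 : ℝ)^k * gpoly T α (2*k) * T (2*k) * dyckGF T m ((2*k+1 : ℕ) : ℤ) := by
    rw [Finset.sum_range_succ]
    have hz : dyckGF T m ((2*K+1 : ℕ) : ℤ) = 0 := dyck_gt T _ _ (by push_cast; omega)
    rw [hz, mul_zero, add_zero]
  rw [hB, hC, ← Finset.sum_add_distrib]
  rw [Finset.mul_sum, Finset.sum_range_succ]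
  have hz : dyckGF T m ((2*K+1 : ℕ) : ℤ) = 0 := dyck_gt T _ _ (by push_cast; omega)
  rw [hz]
  rw [mul_zero, mul_zero, add_zero]
  refine Finset.sum_congr rfl fun k _ => ?_
  have : gpoly T α (2*k+2) = α * gpoly T α (2*k+1) + T (2*k) * gpoly T α (2*k) :=
    g_even_succ T α k
  rw [this]
  ring

lemma Fval : ∀ (j K : ℕ), j ≤ K →
    ∑ k ∈ range (K+1), (-1 : ℝ)^k * gpoly T α (2*k+1) * dyckGF T (2*j+1) ((2*k+1 : ℕ) : ℤ)
    = (-α)^j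
  | 0, K, _ => by
      rw [Finset.sum_eq_single 0]
      · have : ((2*0+1 : ℕ) : ℤ) = ((1:ℕ) : ℤ) := by norm_num
        rw [this, dyck_diag T 1]
        simp [g_one]
      · intro b _ hb
        have : dyckGF T (2*0+1) ((2*b+1 : ℕ) : ℤ) = 0 := dyck_gt T _ _ (by push_cast; omega)
        rw [this]; ring
      · intro h; exact absurd (Finset.mem_range.2 (by omega)) h
  | j+1, K, h => by
      have h1 : 2*(j+1)+1 = (2*j+2)+1 := by ring
      rw [h1, Fstep T α (2*j+2) K (by omega)]
      have h2 : 2*j+2 = (2*j+1)+1 := by ring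
      rw [h2, Estep T α (2*j+1) K (by omega)]
      rw [Fval j K (by omega)]
      ring

lemma rowzero (j K : ℕ) (hj : j + 1 ≤ K) :
    ∑ k ∈ range (K+1),
      (α * dyckGF T (2*j+1) ((2*k+1 : ℕ) : ℤ) + dyckGF T (2*j+3) ((2*k+1 : ℕ) : ℤ))
        * ((-1 : ℝ)^k * gpoly T α (2*k+1)) = 0 := by
  have e : ∀ k ∈ range (K+1),
      (α * dyckGF T (2*j+1) ((2*k+1 : ℕ) : ℤ) + dyckGF T (2*j+3) ((2*k+1 : ℕ) : ℤ))
        * ((-1 : ℝ)^k * gpoly T α (2*k+1))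
      = α * ((-1 : ℝ)^k * gpoly T α (2*k+1) * dyckGF T (2*j+1) ((2*k+1 : ℕ) : ℤ))
        + (-1 : ℝ)^k * gpoly T α (2*k+1) * dyckGF T (2*(j+1)+1) ((2*k+1 : ℕ) : ℤ) := by
    intro k _
    have : 2*(j+1)+1 = 2*j+3 := by ring
    rw [this]; ring
  rw [Finset.sum_congr rfl e, Finset.sum_add_distrib, ← Finset.mul_sum]
  rw [Fval T α j K (by omega), Fval T α (j+1) K (by omega)]
  ring


def Qmat (n : ℕ) : Matrix (Fin n) (Fin n) ℝ := Matrix.of fun j m =>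
  α * dyckGF T (2*(j : ℕ)+1) ((2*(m : ℕ)+1 : ℕ) : ℤ)
    + dyckGF T (2*(j : ℕ)+3) ((2*(m : ℕ)+1 : ℕ) : ℤ)

lemma rowsum (N : ℕ) (j : Fin (N+1)) :
    ∑ m : Fin (N+1), Qmat T α (N+1) j m * ((-1 : ℝ)^(m : ℕ) * gpoly T α (2*(m : ℕ)+1))
    = if (j : ℕ) = N then (-1 : ℝ)^N * gpoly T α (2*N+3) else 0 := by
  have hconv : ∑ m : Fin (N+1), Qmat T α (N+1) j m * ((-1 : ℝ)^(m : ℕ) * gpoly T α (2*(m : ℕ)+1))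
      = ∑ k ∈ range (N+1),
          (α * dyckGF T (2*(j : ℕ)+1) ((2*k+1 : ℕ) : ℤ)
            + dyckGF T (2*(j : ℕ)+3) ((2*k+1 : ℕ) : ℤ))
            * ((-1 : ℝ)^k * gpoly T α (2*k+1)) :=
    Fin.sum_univ_eq_sum_range
      (fun k => (α * dyckGF T (2*(j : ℕ)+1) ((2*k+1 : ℕ) : ℤ)
            + dyckGF T (2*(j : ℕ)+3) ((2*k+1 : ℕ) : ℤ))
            * ((-1 : ℝ)^k * gpoly T α (2*k+1))) (N+1)
  rw [hconv]
  by_cases hj : (j : ℕ) = N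
  · rw [if_pos hj, hj]
    have h0 := rowzero T α N (N+1) (by omega)
    rw [Finset.sum_range_succ] at h0
    have e1 : dyckGF T (2*N+1) ((2*(N+1)+1 : ℕ) : ℤ) = 0 := dyck_gt T _ _ (by push_cast; omega)
    have e2 : dyckGF T (2*N+3) ((2*(N+1)+1 : ℕ) : ℤ) = 1 := by
      have : ((2*(N+1)+1 : ℕ) : ℤ) = ((2*N+3 : ℕ) : ℤ) := by push_cast; ring
      rw [this, dyck_diag]
    rw [e1, e2] at h0
    have h1 : ∑ k ∈ range (N+1),
        (α * dyckGF T (2*N+1) ((2*k+1 : ℕ) : ℤ) + dyckGF T (2*N+3) ((2*k+1 : ℕ) : ℤ))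
          * ((-1 : ℝ)^k * gpoly T α (2*k+1))
        = -((α * 0 + 1) * ((-1 : ℝ)^(N+1) * gpoly T α (2*(N+1)+1))) := by linarith
    rw [h1]
    have : 2*(N+1)+1 = 2*N+3 := by ring
    rw [this]
    ring
  · rw [if_neg hj]
    have hlt : (j : ℕ) < N := by have := j.isLt; omega
    exact rowzero T α (j : ℕ) N (by omega)

lemma detQ (N : ℕ) : (Qmat T α (N+1)).det = gpoly T α (2*N+3) := by
  set n := N + 1 with hn
  set p : Fin n → ℝ := fun k => (-1 : ℝ)^(k : ℕ) * gpoly T α (2*(k : ℕ)+1) with hp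
  set E : Matrix (Fin n) (Fin n) ℝ :=
    Matrix.of (fun j k : Fin n => if (k : ℕ) = 0 then p j else if j = k then 1 else 0) with hE
  have detE : E.det = 1 := by
    rw [Matrix.det_of_lowerTriangular E]
    · rw [Finset.prod_eq_one]
      intro i _
      by_cases hi : (i : ℕ) = 0
      · simp only [hE, Matrix.of_apply, if_pos hi, hp, hi]
        norm_num [g_one]
      · have hi' : i ≠ 0 := by rintro rfl; simp at hi
        simp [hE, hi, hi']
    · intro i k hik
      have hik0 : i < k := hik
      have hik' : (i : ℕ) < (k : ℕ) := hik0
      simp only [hE, Matrix.of_apply]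
      rw [if_neg (by omega), if_neg (Fin.ne_of_lt hik0)]
  have QEapp : ∀ (j k : Fin n), (Qmat T α n * E) j k
      = if (k : ℕ) = 0 then (if (j : ℕ) = N then (-1 : ℝ)^N * gpoly T α (2*N+3) else 0)
        else Qmat T α n j k := by
    intro j k
    rw [Matrix.mul_apply]
    by_cases hk : (k : ℕ) = 0
    · rw [if_pos hk]
      have : ∀ m : Fin n, E m k = p m := by
        intro m
        have hk' : k = 0 := Fin.ext (by rw [hk]; simp)
        simp [hE, hk, hk']
      calc ∑ m : Fin n, Qmat T α n j m * E m k
          = ∑ m : Fin n, Qmat T α n j m * p m := by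
            exact Finset.sum_congr rfl fun m _ => by rw [this m]
        _ = _ := rowsum T α N j
    · rw [if_neg hk]
      have : ∀ m : Fin n, Qmat T α n j m * E m k
          = if m = k then Qmat T α n j m else 0 := by
        intro m
        simp only [hE, Matrix.of_apply, if_neg hk]
        by_cases hmk : m = k
        · rw [if_pos hmk, if_pos hmk, mul_one]
        · rw [if_neg hmk, if_neg hmk, mul_zero]
      rw [Finset.sum_congr rfl fun m _ => this m, Finset.sum_ite_eq' Finset.univ k,
        if_pos (Finset.mem_univ k)]
  set σ := finRotate (N+1) with hσ
  have hperm : ((Qmat T α n * E).submatrix id σ).det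
      = (Equiv.Perm.sign σ : ℝ) * (Qmat T α n * E).det := by
    rw [Matrix.det_permute']
  have htri : ((Qmat T α n * E).submatrix id σ).det = (-1 : ℝ)^N * gpoly T α (2*N+3) := by
    rw [Matrix.det_of_lowerTriangular]
    · rw [Fin.prod_univ_castSucc]
      have hdiag1 : ∀ i : Fin N,
          ((Qmat T α n * E).submatrix id σ) i.castSucc i.castSucc = 1 := by
        intro i
        have hne : i.castSucc ≠ Fin.last N := (Fin.castSucc_lt_last i).ne
        have hcoe : ((σ i.castSucc : Fin n) : ℕ) = (i : ℕ) + 1 := by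
          rw [hσ, coe_finRotate, if_neg hne]
          simp
        rw [Matrix.submatrix_apply, id_eq, QEapp, if_neg (by omega)]
        simp only [Qmat, Matrix.of_apply, hcoe, Fin.coe_castSucc]
        have z1 : dyckGF T (2*(i : ℕ)+1) ((2*((i : ℕ)+1)+1 : ℕ) : ℤ) = 0 :=
          dyck_gt T _ _ (by push_cast; omega)
        have z2 : dyckGF T (2*(i : ℕ)+3) ((2*((i : ℕ)+1)+1 : ℕ) : ℤ) = 1 := by
          have : ((2*((i : ℕ)+1)+1 : ℕ) : ℤ) = ((2*(i : ℕ)+3 : ℕ) : ℤ) := by push_cast; ring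
          rw [this, dyck_diag]
        rw [z1, z2]; ring
      rw [Finset.prod_congr rfl fun i _ => hdiag1 i]
      have hlast : ((Qmat T α n * E).submatrix id σ) (Fin.last N) (Fin.last N)
          = (-1 : ℝ)^N * gpoly T α (2*N+3) := by
        have hcoe : ((σ (Fin.last N) : Fin n) : ℕ) = 0 := by
          rw [hσ, coe_finRotate, if_pos rfl]
        rw [Matrix.submatrix_apply, id_eq, QEapp, if_pos hcoe, if_pos (by simp [Fin.last])]
      rw [hlast]
      simp
    · intro i k hik
      have hik0 : i < k := hik
      have hik' : (i : ℕ) < (k : ℕ) := hik0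
      rw [Matrix.submatrix_apply, id_eq, QEapp]
      by_cases hkl : k = Fin.last N
      · have hcoe : ((σ k : Fin n) : ℕ) = 0 := by rw [hσ, coe_finRotate, if_pos hkl]
        rw [if_pos hcoe, if_neg (by have := k.isLt; omega)]
      · have hcoe : ((σ k : Fin n) : ℕ) = (k : ℕ) + 1 := by
          rw [hσ, coe_finRotate, if_neg hkl]
        rw [if_neg (by omega)]
        simp only [Qmat, Matrix.of_apply, hcoe]
        have z1 : dyckGF T (2*(i : ℕ)+1) ((2*((k : ℕ)+1)+1 : ℕ) : ℤ) = 0 :=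
          dyck_gt T _ _ (by push_cast; omega)
        have z2 : dyckGF T (2*(i : ℕ)+3) ((2*((k : ℕ)+1)+1 : ℕ) : ℤ) = 0 :=
          dyck_gt T _ _ (by push_cast; omega)
        rw [z1, z2]; ring
  have hsign : (Equiv.Perm.sign σ : ℝ) = (-1 : ℝ)^N := by
    rw [hσ, sign_finRotate]
    push_cast
    ring
  have detQE : (Qmat T α n * E).det = (Qmat T α n).det := by
    rw [Matrix.det_mul, detE, mul_one]
  have := htri
  rw [hperm, hsign, detQE] at this
  have hne : ((-1 : ℝ)^N) ≠ 0 := by positivity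
  field_simp at this
  exact this

def Omat (n : ℕ) : Matrix (Fin n) (Fin n) ℝ := Matrix.of fun i m =>
  dyckGF T (2*(i : ℕ)+1) ((2*(m : ℕ)+1 : ℕ) : ℤ)
def O0mat (n : ℕ) : Matrix (Fin n) (Fin n) ℝ := Matrix.of fun i m =>
  dyckGF T (2*(i : ℕ)) ((2*(m : ℕ) : ℕ) : ℤ)

lemma detO (n : ℕ) : (Omat T n).det = 1 := by
  rw [Matrix.det_of_lowerTriangular (Omat T n)]
  · refine Finset.prod_eq_one fun i _ => ?_
    simp only [Omat, Matrix.of_apply]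
    exact dyck_diag T (2*(i : ℕ)+1)
  · intro i k hik
    have hik' : (i : ℕ) < (k : ℕ) := (show i < k from hik)
    exact dyck_gt T _ _ (by push_cast; omega)

lemma detO0 (n : ℕ) : (O0mat T n).det = 1 := by
  rw [Matrix.det_of_lowerTriangular (O0mat T n)]
  · refine Finset.prod_eq_one fun i _ => ?_
    exact dyck_diag T (2*(i : ℕ))
  · intro i k hik
    have hik' : (i : ℕ) < (k : ℕ) := (show i < k from hik)
    exact dyck_gt T _ _ (by push_cast; omega)

lemma factB (n : ℕ) (hn : 0 < n) :
    (Matrix.of fun i j : Fin n =>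
        α * dyckGF T (2 * ((i : ℕ) + (j : ℕ) + 1)) 0
          + dyckGF T (2 * ((i : ℕ) + (j : ℕ) + 2)) 0)
    = Omat T n * (Matrix.diagonal (fun m : Fin n => PP T (2*(m : ℕ)+1)) * (Qmat T α n).transpose) := by
  ext i j
  rw [Matrix.of_apply, Matrix.mul_apply]
  have hrhs : ∀ m : Fin n,
      Omat T n i m * (Matrix.diagonal (fun m : Fin n => PP T (2*(m : ℕ)+1)) * (Qmat T α n).transpose) m j
      = dyckGF T (2*(i : ℕ)+1) ((2*(m : ℕ)+1 : ℕ) : ℤ) * (PP T (2*(m : ℕ)+1) *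
          (α * dyckGF T (2*(j : ℕ)+1) ((2*(m : ℕ)+1 : ℕ) : ℤ)
            + dyckGF T (2*(j : ℕ)+3) ((2*(m : ℕ)+1 : ℕ) : ℤ))) := by
    intro m
    rw [Matrix.diagonal_mul, Matrix.transpose_apply]
    rfl
  rw [Finset.sum_congr rfl fun m _ => hrhs m]
  rw [Fin.sum_univ_eq_sum_range (fun m =>
      dyckGF T (2*(i : ℕ)+1) ((2*m+1 : ℕ) : ℤ) * (PP T (2*m+1) *
          (α * dyckGF T (2*(j : ℕ)+1) ((2*m+1 : ℕ) : ℤ)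
            + dyckGF T (2*(j : ℕ)+3) ((2*m+1 : ℕ) : ℤ)))) n]
  have e1 : 2 * ((i : ℕ) + (j : ℕ) + 1) = (2*(i : ℕ)+1) + (2*(j : ℕ)+1) := by ring
  have e2 : 2 * ((i : ℕ) + (j : ℕ) + 2) = (2*(i : ℕ)+1) + (2*((j : ℕ)+1)+1) := by ring
  rw [e1, e2, moment_odd T (i : ℕ) (j : ℕ) n (by have := i.isLt; omega) hn,
    moment_odd T (i : ℕ) ((j : ℕ)+1) n (by have := i.isLt; omega) hn,
    Finset.mul_sum, ← Finset.sum_add_distrib]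
  refine Finset.sum_congr rfl fun m _ => ?_
  have e3 : 2*((j : ℕ)+1)+1 = 2*(j : ℕ)+3 := by ring
  rw [e3]
  ring

lemma factH (n : ℕ) (hn : 0 < n) :
    (Matrix.of fun i j : Fin n => dyckGF T (2 * ((i : ℕ) + (j : ℕ))) 0)
    = O0mat T n * (Matrix.diagonal (fun m : Fin n => PP T (2*(m : ℕ))) * (O0mat T n).transpose) := by
  ext i j
  rw [Matrix.of_apply, Matrix.mul_apply]
  have hrhs : ∀ m : Fin n,
      O0mat T n i m * (Matrix.diagonal (fun m : Fin n => PP T (2*(m : ℕ))) * (O0mat T n).transpose) m j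
      = dyckGF T (2*(i : ℕ)) ((2*(m : ℕ) : ℕ) : ℤ)
          * dyckGF T (2*(j : ℕ)) ((2*(m : ℕ) : ℕ) : ℤ) * PP T (2*(m : ℕ)) := by
    intro m
    rw [Matrix.diagonal_mul, Matrix.transpose_apply]
    show dyckGF T (2*(i : ℕ)) ((2*(m : ℕ) : ℕ) : ℤ)
        * (PP T (2*(m : ℕ)) * dyckGF T (2*(j : ℕ)) ((2*(m : ℕ) : ℕ) : ℤ)) = _
    ring
  rw [Finset.sum_congr rfl fun m _ => hrhs m]
  rw [Fin.sum_univ_eq_sum_range (fun m =>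
      dyckGF T (2*(i : ℕ)) ((2*m : ℕ) : ℤ) * dyckGF T (2*(j : ℕ)) ((2*m : ℕ) : ℤ)
        * PP T (2*m)) n]
  have e1 : 2 * ((i : ℕ) + (j : ℕ)) = 2*(i : ℕ) + 2*(j : ℕ) := by ring
  rw [e1, moment_even T (i : ℕ) (j : ℕ) n (by have := i.isLt; omega) hn]

lemma final_scalar : ∀ n : ℕ,
    (∑ j ∈ Finset.range (n + 1),
        gpoly T α (2 * j) * gpoly T 0 (2 * j) * ∏ ℓ ∈ Finset.Ico (2 * j) (2 * n), T ℓ)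
    = gpoly T α (2*n+1) * ∏ m ∈ range n, T (2*m)
  | 0 => by simp [gpoly]
  | n+1 => by
      rw [Finset.sum_range_succ]
      have hlast : (∏ ℓ ∈ Finset.Ico (2 * (n+1)) (2 * (n+1)), T ℓ) = 1 := by
        rw [Finset.Ico_self, Finset.prod_empty]
      have hterm : ∀ j ∈ range (n+1),
          gpoly T α (2 * j) * gpoly T 0 (2 * j) * ∏ ℓ ∈ Finset.Ico (2 * j) (2 * (n+1)), T ℓ
          = (gpoly T α (2 * j) * gpoly T 0 (2 * j) * ∏ ℓ ∈ Finset.Ico (2 * j) (2 * n), T ℓ)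
              * (T (2*n) * T (2*n+1)) := by
        intro j hj
        have hj' : j ≤ n := by simp at hj; omega
        have h1 : 2*(n+1) = (2*n+1)+1 := by ring
        rw [h1, Finset.prod_Ico_succ_top (by omega), Finset.prod_Ico_succ_top (by omega)]
        ring
      rw [Finset.sum_congr rfl hterm, ← Finset.sum_mul, final_scalar n, hlast]
      have hg0 : gpoly T 0 (2*(n+1)) = ∏ m ∈ range (n+1), T (2*m) := g_zero_even T (n+1)
      rw [hg0, Finset.prod_range_succ,
        show 2*(n+1)+1 = 2*n+3 from by ring, g_odd_succ T α n,
        show (2*(n+1)) = 2*n+2 from by ring]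
      ring

end HankelAux

/-- Eq. (3.3): for `n ≥ 1` and real `α`,
`det(α c_{i+j+1} + c_{i+j+2})_{i,j=0}^{n-1}
  = (∑_{j=0}^{n} g_{2j}(α) g_{2j}(0) ∏_{ℓ=2j}^{2n-1} T_ℓ) · det(c_{i+j})_{i,j=0}^{n-1}`. -/
theorem hankel_shifted_two_term_dyck_even (T : ℕ → ℝ) (hT : ∀ n, T n ≠ 0)
    (n : ℕ) (hn : 0 < n) (α : ℝ) :
    Matrix.det (Matrix.of fun i j : Fin n =>
        α * dyckGF T (2 * ((i : ℕ) + (j : ℕ) + 1)) 0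
          + dyckGF T (2 * ((i : ℕ) + (j : ℕ) + 2)) 0)
      = (∑ j ∈ Finset.range (n + 1),
            gpoly T α (2 * j) * gpoly T 0 (2 * j) * ∏ ℓ ∈ Finset.Ico (2 * j) (2 * n), T ℓ)
        * Matrix.det (Matrix.of fun i j : Fin n =>
            dyckGF T (2 * ((i : ℕ) + (j : ℕ))) 0) := by
  open HankelAux in
  obtain ⟨N, rfl⟩ : ∃ N, n = N + 1 := ⟨n - 1, by omega⟩
  rw [factB T α (N+1) hn, factH T (N+1) hn]
  rw [Matrix.det_mul, Matrix.det_mul, Matrix.det_mul, Matrix.det_mul,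
    Matrix.det_transpose, Matrix.det_transpose,
    detO, detO0, Matrix.det_diagonal, Matrix.det_diagonal, detQ,
    final_scalar T α (N+1)]
  have hprod : (∏ m : Fin (N+1), PP T (2*(m : ℕ)+1))
      = (∏ m : Fin (N+1), PP T (2*(m : ℕ))) * ∏ m ∈ Finset.range (N+1), T (2*m) := by
    rw [Fin.prod_univ_eq_prod_range (fun m => PP T (2*m+1)) (N+1),
      Fin.prod_univ_eq_prod_range (fun m => PP T (2*m)) (N+1),
      ← Finset.prod_mul_distrib]
    refine Finset.prod_congr rfl fun m _ => ?_
    rw [PP_succ]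
  rw [hprod]
  have h3 : 2*(N+1)+1 = 2*N+3 := by ring
  rw [h3]
  ring
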